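/- After an incremental edge update on (u,v), for any source s and any edge (a,b): (a,b) ∈ DAG'(s) if and only if at least one of the following holds: (i) (a,b) ∈ DAG(s), (a,b) ≠ (u,v), and flag(s,b) ∈ {UN-changed, NUM-changed}; (ii) (a,b) ∈ DAG(v) and flag(s,b) ∈ {NUM-changed, WT-changed}; (iii) (a,b) = (u,v) and flag(s,v) ∈ {NUM-changed, WT-changed}. -/

import Mathlib

open scoped ENNReal

namespace BC

variable {V : Type*}

/-- `p` is a path from `s` to `t` in the weighted digraph with weight function `w`;
an edge is present iff its weight is not `⊤`. -/
def IsPath (w : V → V → ℝ≥0∞) (s t : V) (p : List V) : Prop :=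
  p ≠ [] ∧ p.head? = some s ∧ p.getLast? = some t ∧ p.Chain' (fun a b => w a b ≠ ⊤)

/-- The weight of a path: the sum of the weights of its consecutive edges. -/
noncomputable def pWeight (w : V → V → ℝ≥0∞) (p : List V) : ℝ≥0∞ :=
  ((p.zip p.tail).map fun e => w e.1 e.2).sum

/-- The shortest-path distance `d(s,t)` (equal to `⊤` if no path exists). -/
noncomputable def dist (w : V → V → ℝ≥0∞) (s t : V) : ℝ≥0∞ :=
  ⨅ p ∈ {p | IsPath w s t p}, pWeight w p

/-- `p` is a shortest path from `s` to `t`. -/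
def IsShortest (w : V → V → ℝ≥0∞) (s t : V) (p : List V) : Prop :=
  IsPath w s t p ∧ pWeight w p = dist w s t

/-- `σ_{st}`: the number of shortest paths from `s` to `t`. -/
noncomputable def nsp (w : V → V → ℝ≥0∞) (s t : V) : ℕ :=
  Set.ncard {p | IsShortest w s t p}

/-- `σ_{st}(x)`: the number of shortest paths from `s` to `t` passing through `x`. -/
noncomputable def nspVia (w : V → V → ℝ≥0∞) (s t x : V) : ℕ :=
  Set.ncard {p | IsShortest w s t p ∧ x ∈ p}

/-- The directed edge `(a,b)` lies on the path `p`. -/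
def edgeOn (p : List V) (a b : V) : Prop := (a, b) ∈ p.zip p.tail

/-- The shortest-path DAG rooted at `s`: the edges lying on shortest paths from `s`. -/
def dagSet (w : V → V → ℝ≥0∞) (s : V) : Set (V × V) :=
  {e | w e.1 e.2 ≠ ⊤ ∧ dist w s e.1 ≠ ⊤ ∧ dist w s e.1 + w e.1 e.2 = dist w s e.2}

/-- flag(s,t) = WT-changed : the distance from `s` to `t` decreased. -/
def WTchanged (w w' : V → V → ℝ≥0∞) (s t : V) : Prop := dist w' s t < dist w s t

/-- flag(s,t) = NUM-changed : same distance, strictly more shortest paths. -/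
def NUMchanged (w w' : V → V → ℝ≥0∞) (s t : V) : Prop :=
  dist w' s t = dist w s t ∧ nsp w s t < nsp w' s t

/-- flag(s,t) = UN-changed : same distance, same number of shortest paths. -/
def UNchanged (w w' : V → V → ℝ≥0∞) (s t : V) : Prop :=
  dist w' s t = dist w s t ∧ nsp w' s t = nsp w s t

set_option linter.unusedSectionVars false

@[simp] lemma pWeight_nil (w : V → V → ℝ≥0∞) : pWeight w ([] : List V) = 0 := rfl

@[simp] lemma pWeight_single (w : V → V → ℝ≥0∞) (a : V) : pWeight w [a] = 0 := rfl

lemma pWeight_cons_cons (w : V → V → ℝ≥0∞) (a b : V) (l : List V) :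
    pWeight w (a :: b :: l) = w a b + pWeight w (b :: l) := by
  simp [pWeight]

lemma chain'_iff_zip {R : V → V → Prop} : ∀ {p : List V},
    p.Chain' R ↔ ∀ e ∈ p.zip p.tail, R e.1 e.2
  | [] => by simp [List.Chain']
  | [a] => by simp [List.Chain']
  | a :: b :: l => by
    rw [show List.Chain' R (a :: b :: l) ↔ R a b ∧ List.Chain' R (b :: l) from List.isChain_cons_cons, chain'_iff_zip (p := b :: l)]
    simp only [List.zip_cons_cons, List.tail, List.mem_cons, Prod.mk.injEq]
    constructor
    · rintro ⟨h1, h2⟩ e he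
      rcases he with he | he
      · simp [he, h1]
      · exact h2 e he
    · intro h
      exact ⟨h (a, b) (Or.inl rfl), fun e he => h e (Or.inr he)⟩

lemma pweight_append (w : V → V → ℝ≥0∞) (x y : V) (l2 : List V) : ∀ (l1 : List V),
    pWeight w (l1 ++ x :: y :: l2) = pWeight w (l1 ++ [x]) + w x y + pWeight w (y :: l2)
  | [] => by simp [pWeight_cons_cons]
  | [a] => by simp [pWeight_cons_cons]; ring
  | a :: c :: l1 => by
    have := pweight_append w x y l2 (c :: l1)
    simp only [List.cons_append, pWeight_cons_cons] at *
    rw [this]; ring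

lemma mem_zip_split {x y : V} : ∀ {p : List V}, (x, y) ∈ p.zip p.tail →
    ∃ l1 l2, p = l1 ++ x :: y :: l2
  | [] => by simp
  | [a] => by simp
  | a :: b :: l => by
    intro h
    simp only [List.zip_cons_cons, List.tail, List.mem_cons, Prod.mk.injEq] at h
    rcases h with ⟨h1, h2⟩ | h2
    · exact ⟨[], l, by simp [h1, h2]⟩
    · obtain ⟨l1, l2, hl⟩ := mem_zip_split (p := b :: l) h2
      exact ⟨a :: l1, l2, by simp [hl]⟩


private lemma split_first_aux {u v : V} : ∀ (n : ℕ) (l1 l2 : List V), l1.length ≤ n →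
    ∃ t1 t2, l1 ++ u :: v :: l2 = t1 ++ u :: v :: t2 ∧
      (u, v) ∉ (t1 ++ [u]).zip (t1 ++ [u]).tail := by
  intro n
  induction n with
  | zero =>
    intro l1 l2 hl
    refine ⟨l1, l2, rfl, ?_⟩
    have : l1 = [] := List.length_eq_zero_iff.mp (Nat.le_zero.mp hl)
    subst this; simp
  | succ n ih =>
    intro l1 l2 hl
    by_cases hm : (u, v) ∈ (l1 ++ [u]).zip (l1 ++ [u]).tail
    · obtain ⟨m1, m2, hm12⟩ := mem_zip_split hm
      have hlen : m1.length + 1 ≤ l1.length := by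
        have := congrArg List.length hm12
        simp at this; omega
      obtain ⟨t1, t2, ht, hnot⟩ := ih m1 (m2 ++ v :: l2) (by omega)
      refine ⟨t1, t2, ?_, hnot⟩
      have h1 : l1 ++ u :: v :: l2 = m1 ++ u :: v :: (m2 ++ v :: l2) := by
        have : l1 ++ u :: v :: l2 = (l1 ++ [u]) ++ v :: l2 := by simp
        rw [this, hm12]; simp
      rw [h1, ht]
    · exact ⟨l1, l2, rfl, hm⟩

/-- split at the first occurrence of the edge (u,v) -/
lemma split_first {u v : V} {p : List V} (h : (u, v) ∈ p.zip p.tail) :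
    ∃ l1 l2, p = l1 ++ u :: v :: l2 ∧ (u, v) ∉ (l1 ++ [u]).zip (l1 ++ [u]).tail := by
  obtain ⟨l1, l2, rfl⟩ := mem_zip_split h
  obtain ⟨t1, t2, ht, hnot⟩ := split_first_aux l1.length l1 l2 le_rfl
  exact ⟨t1, t2, ht, hnot⟩

private lemma split_last_aux {u v : V} : ∀ (n : ℕ) (l1 l2 : List V), l2.length ≤ n →
    ∃ t1 t2, l1 ++ u :: v :: l2 = t1 ++ u :: v :: t2 ∧ (u, v) ∉ (v :: t2).zip t2 := by
  intro n
  induction n with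
  | zero =>
    intro l1 l2 hl
    refine ⟨l1, l2, rfl, ?_⟩
    have : l2 = [] := List.length_eq_zero_iff.mp (Nat.le_zero.mp hl)
    subst this; simp
  | succ n ih =>
    intro l1 l2 hl
    by_cases hm : (u, v) ∈ (v :: l2).zip ((v :: l2).tail)
    · obtain ⟨m1, m2, hm12⟩ := mem_zip_split hm
      have hlen : m2.length + 1 ≤ l2.length := by
        have := congrArg List.length hm12
        simp at this; omega
      obtain ⟨t1, t2, ht, hnot⟩ := ih (l1 ++ u :: m1) m2 (by omega)
      refine ⟨t1, t2, ?_, hnot⟩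
      have h1 : l1 ++ u :: v :: l2 = (l1 ++ u :: m1) ++ u :: v :: m2 := by
        rw [hm12]; simp
      rw [h1, ht]
    · exact ⟨l1, l2, rfl, by simpa using hm⟩

/-- split at the last occurrence of the edge (u,v) -/
lemma split_last {u v : V} {p : List V} (h : (u, v) ∈ p.zip p.tail) :
    ∃ l1 l2, p = l1 ++ u :: v :: l2 ∧ (u, v) ∉ (v :: l2).zip l2 := by
  obtain ⟨l1, l2, rfl⟩ := mem_zip_split h
  obtain ⟨t1, t2, ht, hnot⟩ := split_last_aux l2.length l1 l2 le_rfl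
  exact ⟨t1, t2, ht, hnot⟩


section Basics
variable {w : V → V → ℝ≥0∞} {s t x y : V} {p : List V}

lemma dist_le_pWeight (hp : IsPath w s t p) : dist w s t ≤ pWeight w p :=
  iInf₂_le p hp

lemma le_dist {c : ℝ≥0∞} (h : ∀ p, IsPath w s t p → c ≤ pWeight w p) : c ≤ dist w s t :=
  le_iInf₂ h

lemma list_sum_ne_top : ∀ {l : List ℝ≥0∞}, (∀ z ∈ l, z ≠ ⊤) → l.sum ≠ ⊤
  | [], _ => by simp
  | z :: l, h => by
    simp only [List.sum_cons]
    exact ENNReal.add_ne_top.mpr ⟨h z List.mem_cons_self,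
      list_sum_ne_top fun z' hz' => h z' (List.mem_cons_of_mem z hz')⟩

lemma pWeight_ne_top (hp : IsPath w s t p) : pWeight w p ≠ ⊤ := by
  have h := chain'_iff_zip.mp hp.2.2.2
  exact list_sum_ne_top (by
    intro z hz
    obtain ⟨e, he, rfl⟩ := List.mem_map.mp hz
    exact h e he)

lemma isPath_singleton : IsPath w x x [x] := ⟨by simp, rfl, rfl, List.isChain_singleton x⟩

lemma dist_self (w : V → V → ℝ≥0∞) (x : V) : dist w x x = 0 :=
  le_antisymm (by simpa [pWeight_single] using
    dist_le_pWeight (isPath_singleton (w := w) (x := x))) (by simp)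

lemma prefix_path {l1 l2 : List V} (hp : IsPath w s t (l1 ++ y :: l2)) :
    IsPath w s y (l1 ++ [y]) := by
  obtain ⟨-, hh, -, hc⟩ := hp
  refine ⟨by simp, ?_, by simp, ?_⟩
  · rw [← hh]; simp
  · have : l1 ++ y :: l2 = (l1 ++ [y]) ++ l2 := by simp
    rw [this] at hc
    exact (List.isChain_append.mp hc).1

lemma suffix_path {l1 l2 : List V} (hp : IsPath w s t (l1 ++ y :: l2)) :
    IsPath w y t (y :: l2) := by
  obtain ⟨-, -, hl, hc⟩ := hp
  refine ⟨by simp, rfl, ?_, ?_⟩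
  · rw [← hl]
    have hsome : (y :: l2).getLast?.isSome := by
      rw [List.getLast?_isSome]; simp
    simp [Option.or_of_isSome hsome]
  · exact (List.isChain_split.mp hc).2

lemma path_snoc (hp : IsPath w s x p) (hxy : w x y ≠ ⊤) :
    IsPath w s y (p ++ [y]) ∧ pWeight w (p ++ [y]) = pWeight w p + w x y := by
  obtain ⟨l1, rfl⟩ : ∃ l1, p = l1 ++ [x] := by
    obtain ⟨hne, hh, hl, hc⟩ := hp
    exact (List.getLast?_eq_some_iff).mp hl
  constructor
  · obtain ⟨hne, hh, hl, hc⟩ := hp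
    refine ⟨by simp, ?_, ?_, ?_⟩
    · rw [← hh]; simp
    · simp
    · have : l1 ++ [x] ++ [y] = l1 ++ x :: y :: [] := by simp
      rw [this]; show List.IsChain _ _; rw [List.isChain_append_cons_cons]
      exact ⟨hc, hxy, List.isChain_singleton y⟩
  · have : l1 ++ [x] ++ [y] = l1 ++ x :: y :: [] := by simp
    rw [this, pweight_append, pWeight_single, add_zero]

end Basics

section Fin
variable [Fintype V] {w : V → V → ℝ≥0∞} {s t : V}

lemma length_mul_le_sum {ε : ℝ≥0∞} : ∀ {l : List ℝ≥0∞}, (∀ z ∈ l, ε ≤ z) →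
    (l.length : ℝ≥0∞) * ε ≤ l.sum
  | [], _ => by simp
  | z :: l, h => by
    simp only [List.length_cons, List.sum_cons, Nat.cast_add, Nat.cast_one]
    rw [add_mul, one_mul, add_comm ((l.length : ℝ≥0∞) * ε) ε]
    exact add_le_add (h z List.mem_cons_self)
      (length_mul_le_sum fun z' hz' => h z' (List.mem_cons_of_mem z hz'))

lemma finite_paths_le (hpos : ∀ a b, 0 < w a b) {c : ℝ≥0∞} (hc : c ≠ ⊤) :
    {p : List V | IsPath w s t p ∧ pWeight w p ≤ c}.Finite := by
  set ε : ℝ≥0∞ := (Finset.univ : Finset (V × V)).inf (fun e => w e.1 e.2) with hε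
  have hε0 : 0 < ε := by
    rw [hε]
    exact (Finset.lt_inf_iff (by simp)).mpr fun e _ => hpos e.1 e.2
  obtain ⟨N, hN⟩ := ENNReal.exists_nat_gt (show c / ε ≠ ⊤ by
    exact (ENNReal.div_lt_top hc hε0.ne').ne)
  have hcN : c < (N : ℝ≥0∞) * ε :=
    (ENNReal.div_lt_iff (Or.inl hε0.ne') (Or.inr hc)).mp hN
  apply (List.finite_length_le V (N + 1)).subset
  rintro p ⟨hp, hpc⟩
  simp only [Set.mem_setOf_eq]
  by_contra hlen
  push_neg at hlen
  -- p.zip p.tail has length p.length - 1 ≥ N + 1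
  have hzl : N + 1 ≤ (p.zip p.tail).length := by
    rw [List.length_zip, List.length_tail]
    omega
  have h1 : (((p.zip p.tail).map fun e => w e.1 e.2).length : ℝ≥0∞) * ε ≤ pWeight w p := by
    apply length_mul_le_sum
    intro z hz
    obtain ⟨e, _, rfl⟩ := List.mem_map.mp hz
    exact Finset.inf_le (Finset.mem_univ e)
  rw [List.length_map] at h1
  have h2 : (N : ℝ≥0∞) * ε ≤ ((p.zip p.tail).length : ℝ≥0∞) * ε := by
    apply mul_le_mul_left
    exact_mod_cast le_trans (by omega : N ≤ N + 1) hzl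
  exact absurd (lt_of_lt_of_le hcN (le_trans h2 (le_trans h1 hpc))) (lt_irrefl c)

lemma shortest_finite (hpos : ∀ a b, 0 < w a b) :
    {p : List V | IsShortest w s t p}.Finite := by
  by_cases hd : dist w s t = ⊤
  · convert Set.finite_empty
    ext p
    simp only [Set.mem_setOf_eq, Set.mem_empty_iff_false, iff_false]
    rintro ⟨hp, hw⟩
    exact pWeight_ne_top hp (hw.trans hd)
  · exact (finite_paths_le hpos hd).subset fun p hp =>
      ⟨hp.1, le_of_eq hp.2⟩

lemma exists_path_of_dist_ne_top (h : dist w s t ≠ ⊤) : ∃ p, IsPath w s t p := by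
  by_contra h0
  push_neg at h0
  apply h
  have he : {p : List V | IsPath w s t p} = ∅ := by
    ext p; simp [h0 p]
  rw [dist, he]
  simp

lemma exists_shortest (hpos : ∀ a b, 0 < w a b) (h : dist w s t ≠ ⊤) :
    ∃ p, IsShortest w s t p := by
  obtain ⟨p0, hp0⟩ := exists_path_of_dist_ne_top h
  have hS : {p : List V | IsPath w s t p ∧ pWeight w p ≤ pWeight w p0}.Finite :=
    finite_paths_le hpos (pWeight_ne_top hp0)
  have hne : (hS.toFinset).Nonempty := ⟨p0, by simp [hp0]⟩
  obtain ⟨q, hq, hqmin⟩ := Finset.exists_min_image (hS.toFinset) (pWeight w) hne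
  rw [Set.Finite.mem_toFinset] at hq
  refine ⟨q, hq.1, le_antisymm ?_ (dist_le_pWeight hq.1)⟩
  apply le_iInf₂
  intro r hr
  by_cases hrc : pWeight w r ≤ pWeight w p0
  · exact hqmin r (by rw [Set.Finite.mem_toFinset]; exact ⟨hr, hrc⟩)
  · exact le_trans (hqmin p0 (by rw [Set.Finite.mem_toFinset]; exact ⟨hp0, le_rfl⟩))
      (le_of_not_ge hrc)

end Fin

section Transfer
variable {w w' : V → V → ℝ≥0∞} {u v s t x y : V} {p : List V}

lemma pWeight_mono (hle : ∀ a b, w' a b ≤ w a b) (p : List V) :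
    pWeight w' p ≤ pWeight w p := by
  rw [pWeight, pWeight]
  induction p.zip p.tail with
  | nil => simp
  | cons e l ih =>
    simp only [List.map_cons, List.sum_cons]
    exact add_le_add (hle e.1 e.2) ih

lemma path_transfer (hle : ∀ a b, w' a b ≤ w a b) (hp : IsPath w s t p) :
    IsPath w' s t p :=
  ⟨hp.1, hp.2.1, hp.2.2.1, List.IsChain.imp
    (fun a b hab h' => hab (top_le_iff.mp (by rw [← h']; exact hle a b))) hp.2.2.2⟩

lemma dist_mono (hle : ∀ a b, w' a b ≤ w a b) (s t : V) :
    dist w' s t ≤ dist w s t :=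
  le_iInf₂ fun p hp => le_trans (dist_le_pWeight (path_transfer hle hp)) (pWeight_mono hle p)

lemma pWeight_congr_avoid (hsame : ∀ a b : V, (a, b) ≠ (u, v) → w' a b = w a b)
    (hm : (u, v) ∉ p.zip p.tail) : pWeight w' p = pWeight w p := by
  rw [pWeight, pWeight]
  congr 1
  apply List.map_congr_left
  intro e he
  exact hsame e.1 e.2 (fun h => hm (h ▸ (Prod.mk.eta (p := e)).symm ▸ he))

lemma path_congr_avoid (hsame : ∀ a b : V, (a, b) ≠ (u, v) → w' a b = w a b)
    (hm : (u, v) ∉ p.zip p.tail) (hp : IsPath w' s t p) : IsPath w s t p := by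
  refine ⟨hp.1, hp.2.1, hp.2.2.1, chain'_iff_zip.mpr fun e he => ?_⟩
  have := chain'_iff_zip.mp hp.2.2.2 e he
  rwa [hsame e.1 e.2 (fun h => hm (h ▸ (Prod.mk.eta (p := e)).symm ▸ he))] at this

/-- the distance to `u` does not change -/
lemma dist_u_eq (hdec : w' u v < w u v)
    (hsame : ∀ a b : V, (a, b) ≠ (u, v) → w' a b = w a b) (s : V) :
    dist w' s u = dist w s u := by
  have hle : ∀ a b, w' a b ≤ w a b := fun a b => by
    by_cases h : (a, b) = (u, v)
    · rw [show a = u by exact congrArg Prod.fst h, show b = v by exact congrArg Prod.snd h]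
      exact hdec.le
    · rw [hsame a b h]
  refine le_antisymm (dist_mono hle s u) (le_dist fun q hq => ?_)
  by_cases hm : (u, v) ∈ q.zip q.tail
  · obtain ⟨l1, l2, rfl, hnot⟩ := split_first hm
    have hr : IsPath w' s u (l1 ++ [u]) := prefix_path (y := u) (l2 := v :: l2) hq
    have hrw : IsPath w s u (l1 ++ [u]) := path_congr_avoid hsame hnot hr
    calc dist w s u ≤ pWeight w (l1 ++ [u]) := dist_le_pWeight hrw
      _ = pWeight w' (l1 ++ [u]) := (pWeight_congr_avoid hsame hnot).symm
      _ ≤ pWeight w' (l1 ++ u :: v :: l2) := by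
          rw [pweight_append]
          exact le_add_right (le_add_right le_rfl)
  · calc dist w s u ≤ pWeight w q := dist_le_pWeight (path_congr_avoid hsame hm hq)
      _ = pWeight w' q := (pWeight_congr_avoid hsame hm).symm

end Transfer


section Main
variable [Fintype V] {w w' : V → V → ℝ≥0∞} {u v s t x y : V} {p : List V}

lemma wle (hdec : w' u v < w u v)
    (hsame : ∀ a b : V, (a, b) ≠ (u, v) → w' a b = w a b) : ∀ a b, w' a b ≤ w a b := by
  intro a b
  by_cases h : (a, b) = (u, v)
  · rw [show a = u from congrArg Prod.fst h, show b = v from congrArg Prod.snd h]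
    exact hdec.le
  · rw [hsame a b h]

lemma dist_triangle (hpos : ∀ a b, 0 < w a b) (hxy : w x y ≠ ⊤) (s : V) :
    dist w s y ≤ dist w s x + w x y := by
  by_cases h : dist w s x = ⊤
  · rw [h]; simp
  · obtain ⟨p, hp, hpw⟩ := exists_shortest hpos h
    have := path_snoc hp hxy
    calc dist w s y ≤ pWeight w (p ++ [y]) := dist_le_pWeight this.1
      _ = dist w s x + w x y := by rw [this.2, hpw]

lemma dist_comp (hpos : ∀ a b, 0 < w a b) (hdec : w' u v < w u v)
    (hsame : ∀ a b : V, (a, b) ≠ (u, v) → w' a b = w a b) (s x : V) :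
    dist w' s x ≤ dist w s u + w' u v + dist w v x := by
  have hle := wle hdec hsame
  by_cases h1 : dist w s u = ⊤
  · rw [h1]; simp
  by_cases h2 : dist w v x = ⊤
  · rw [h2]; simp
  obtain ⟨p1, hp1, hw1⟩ := exists_shortest hpos h1
  obtain ⟨p2, hp2, hw2⟩ := exists_shortest hpos h2
  obtain ⟨l1, rfl⟩ : ∃ l1, p1 = l1 ++ [u] := List.getLast?_eq_some_iff.mp hp1.2.2.1
  obtain ⟨l2, rfl⟩ : ∃ l2, p2 = v :: l2 := by
    cases p2 with
    | nil => exact absurd rfl hp2.1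
    | cons v' l2 => exact ⟨l2, by rw [show v' = v from by simpa using hp2.2.1]⟩
  have hq : IsPath w' s x ((l1 ++ [u]) ++ v :: l2) := by
    refine ⟨by simp, ?_, ?_, ?_⟩
    · rw [← hp1.2.1]; simp
    · rw [← hp2.2.2.1]
      have hsome : (v :: l2).getLast?.isSome := by rw [List.getLast?_isSome]; simp
      simp [Option.or_of_isSome hsome]
    · show List.IsChain _ _; rw [List.isChain_append]
      exact ⟨(path_transfer hle hp1).2.2.2, (path_transfer hle hp2).2.2.2,
        by simp [hdec.ne_top]⟩
  have hqw : pWeight w' ((l1 ++ [u]) ++ v :: l2) =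
      pWeight w' (l1 ++ [u]) + w' u v + pWeight w' (v :: l2) := by
    have : (l1 ++ [u]) ++ v :: l2 = l1 ++ u :: v :: l2 := by simp
    rw [this, pweight_append]
  calc dist w' s x ≤ pWeight w' ((l1 ++ [u]) ++ v :: l2) := dist_le_pWeight hq
    _ ≤ pWeight w (l1 ++ [u]) + w' u v + pWeight w (v :: l2) := by
        rw [hqw]
        exact add_le_add (add_le_add (pWeight_mono hle _) le_rfl) (pWeight_mono hle _)
    _ = dist w s u + w' u v + dist w v x := by rw [hw1, hw2]

lemma pweight_ge_of_mem (hdec : w' u v < w u v)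
    (hsame : ∀ a b : V, (a, b) ≠ (u, v) → w' a b = w a b) {q : List V}
    (hq : IsPath w' s x q) (hm : (u, v) ∈ q.zip q.tail) :
    dist w s u + w' u v + dist w v x ≤ pWeight w' q := by
  obtain ⟨l1, l2, rfl, hnot⟩ := split_last hm
  have hr : IsPath w' s u (l1 ++ [u]) := prefix_path (y := u) (l2 := v :: l2) hq
  have ht' : IsPath w' u x (u :: v :: l2) := suffix_path (y := u) hq
  have ht2 : IsPath w' v x (v :: l2) := suffix_path (l1 := l1 ++ [u]) (y := v) (l2 := l2)
    (by rw [show (l1 ++ [u]) ++ v :: l2 = l1 ++ u :: v :: l2 by simp]; exact hq)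
  have ht2w : IsPath w v x (v :: l2) := path_congr_avoid hsame (by simpa using hnot) ht2
  rw [pweight_append]
  refine add_le_add (add_le_add ?_ le_rfl) ?_
  · calc dist w s u = dist w' s u := (dist_u_eq hdec hsame s).symm
      _ ≤ pWeight w' (l1 ++ [u]) := dist_le_pWeight hr
  · calc dist w v x ≤ pWeight w (v :: l2) := dist_le_pWeight ht2w
      _ = pWeight w' (v :: l2) := (pWeight_congr_avoid hsame (by simpa using hnot)).symm

/-- if the distance decreased, the new shortest path must use (u,v), and the new
distance equals going through the updated edge -/
lemma dist_eq_of_lt (hpos : ∀ a b, 0 < w a b) (hpos' : ∀ a b, 0 < w' a b)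
    (hdec : w' u v < w u v) (hsame : ∀ a b : V, (a, b) ≠ (u, v) → w' a b = w a b)
    (hx : dist w' s x < dist w s x) :
    dist w' s x = dist w s u + w' u v + dist w v x := by
  obtain ⟨q, hq, hqw⟩ := exists_shortest hpos' hx.ne_top
  have hm : (u, v) ∈ q.zip q.tail := by
    by_contra hm
    have h1 : IsPath w s x q := path_congr_avoid hsame hm hq
    have := dist_le_pWeight h1
    rw [← pWeight_congr_avoid hsame hm, hqw] at this
    exact absurd (lt_of_le_of_lt this hx) (lt_irrefl _)
  exact le_antisymm (dist_comp hpos hdec hsame s x)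
    (hqw ▸ pweight_ge_of_mem hdec hsame hq hm)

lemma old_subset_new (hdec : w' u v < w u v)
    (hsame : ∀ a b : V, (a, b) ≠ (u, v) → w' a b = w a b)
    (hd : dist w' s x = dist w s x) :
    {p | IsShortest w s x p} ⊆ {p | IsShortest w' s x p} := by
  have hle := wle hdec hsame
  rintro p ⟨hp, hpw⟩
  refine ⟨path_transfer hle hp, le_antisymm ?_ (dist_le_pWeight (path_transfer hle hp))⟩
  calc pWeight w' p ≤ pWeight w p := pWeight_mono hle p
    _ = dist w' s x := by rw [hpw, hd]

lemma nsp_le_new (hpos' : ∀ a b, 0 < w' a b) (hdec : w' u v < w u v)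
    (hsame : ∀ a b : V, (a, b) ≠ (u, v) → w' a b = w a b)
    (hd : dist w' s x = dist w s x) : nsp w s x ≤ nsp w' s x :=
  Set.ncard_le_ncard (old_subset_new hdec hsame hd) (shortest_finite hpos')

lemma exists_new_not_old (hpos : ∀ a b, 0 < w a b)
    (hn : nsp w s x < nsp w' s x) :
    ∃ q, IsShortest w' s x q ∧ ¬ IsShortest w s x q := by
  by_contra h0
  push_neg at h0
  have hsub : {p | IsShortest w' s x p} ⊆ {p | IsShortest w s x p} := fun q hq => h0 q hq
  have := Set.ncard_le_ncard hsub (shortest_finite hpos)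
  rw [nsp, nsp] at hn
  omega

end Main


/-- Lemma 3: after an incremental edge update on `(u,v)`,
`(a,b) ∈ DAG'(s)` iff one of:
(i) `(a,b) ∈ DAG(s)`, `(a,b) ≠ (u,v)`, and flag(s,b) ∈ {UN-changed, NUM-changed};
(ii) `(a,b) ∈ DAG(v)` and flag(s,b) ∈ {NUM-changed, WT-changed};
(iii) `(a,b) = (u,v)` and flag(s,v) ∈ {NUM-changed, WT-changed}. -/
theorem update_dag_correct [Fintype V] (w w' : V → V → ℝ≥0∞) (u v : V)
    (hpos : ∀ a b, 0 < w a b) (hpos' : ∀ a b, 0 < w' a b)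
    (hdec : w' u v < w u v)
    (hsame : ∀ a b : V, (a, b) ≠ (u, v) → w' a b = w a b) (s a b : V) :
    (a, b) ∈ dagSet w' s ↔
      ((a, b) ∈ dagSet w s ∧ (a, b) ≠ (u, v) ∧
        (UNchanged w w' s b ∨ NUMchanged w w' s b)) ∨
      ((a, b) ∈ dagSet w v ∧ (NUMchanged w w' s b ∨ WTchanged w w' s b)) ∨
      ((a, b) = (u, v) ∧ (NUMchanged w w' s v ∨ WTchanged w w' s v)) := by
  have hle : ∀ a b, w' a b ≤ w a b := wle hdec hsame
  have hwuv' : w' u v ≠ ⊤ := hdec.ne_top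
  by_cases hab : (a, b) = (u, v)
  · rw [Prod.mk.injEq] at hab
    obtain ⟨rfl, rfl⟩ := hab
    have hni : (a, b) ∉ dagSet w b := by
      rintro ⟨h1, h2, h3⟩
      rw [dist_self] at h3
      exact (hpos a b).ne' (add_eq_zero.mp h3).2
    constructor
    · rintro ⟨h1, h2, h3⟩
      refine Or.inr (Or.inr ⟨rfl, ?_⟩)
      rcases lt_or_eq_of_le (dist_mono hle s b) with hlt | heq
      · exact Or.inr hlt
      · left
        refine ⟨heq, ?_⟩
        have hDu : dist w s a ≠ ⊤ := by
          rw [← dist_u_eq hdec hsame s]; exact h2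
        obtain ⟨p, hp, hpw⟩ := exists_shortest hpos hDu
        have hpw' : pWeight w' p = dist w s a := by
          refine le_antisymm (by rw [← hpw]; exact pWeight_mono hle p) ?_
          rw [← dist_u_eq hdec hsame s]
          exact dist_le_pWeight (path_transfer hle hp)
        obtain ⟨l1, rfl⟩ : ∃ l1, p = l1 ++ [a] := List.getLast?_eq_some_iff.mp hp.2.2.1
        have hsnoc := path_snoc (path_transfer hle hp) hwuv'
        have hqshort : IsShortest w' s b ((l1 ++ [a]) ++ [b]) := by
          refine ⟨hsnoc.1, ?_⟩
          rw [hsnoc.2, hpw', ← h3, dist_u_eq hdec hsame s]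
        have hqnot : ¬ IsShortest w s b ((l1 ++ [a]) ++ [b]) := by
          rintro ⟨hq, hqw⟩
          have hqw2 : pWeight w ((l1 ++ [a]) ++ [b]) =
              pWeight w (l1 ++ [a]) + w a b := by
            rw [show (l1 ++ [a]) ++ [b] = l1 ++ a :: b :: [] by simp,
              pweight_append, pWeight_single, add_zero]
          rw [hqw2, hpw] at hqw
          -- hqw : dist w s a + w a b = dist w s b
          have hlt2 : dist w s b < dist w s a + w a b := by
            calc dist w s b = dist w' s b := heq.symm
              _ = dist w' s a + w' a b := h3.symm
              _ = dist w s a + w' a b := by rw [dist_u_eq hdec hsame s]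
              _ < dist w s a + w a b := ENNReal.add_lt_add_left hDu hdec
          exact absurd hqw hlt2.ne'
        rw [nsp, nsp]
        refine Set.ncard_lt_ncard ?_ (shortest_finite hpos')
        rw [Set.ssubset_def]
        exact ⟨old_subset_new hdec hsame heq, fun hsub => hqnot (hsub hqshort)⟩
    · rintro (⟨-, hne, -⟩ | ⟨hmem, -⟩ | ⟨-, hflag⟩)
      · exact absurd rfl hne
      · exact absurd hmem hni
      · rcases hflag with ⟨hd, hn⟩ | hwt
        · obtain ⟨q, hq', hqnot⟩ := exists_new_not_old hpos hn
          have hm : (a, b) ∈ q.zip q.tail := by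
            by_contra hm
            exact hqnot ⟨path_congr_avoid hsame hm hq'.1,
              by rw [← pWeight_congr_avoid hsame hm, hq'.2, hd]⟩
          have hge := pweight_ge_of_mem hdec hsame hq'.1 hm
          rw [dist_self, add_zero, hq'.2] at hge
          have htri := dist_triangle hpos' hwuv' s
          rw [dist_u_eq hdec hsame s] at htri
          have heq2 : dist w' s b = dist w s a + w' a b := le_antisymm htri hge
          have hne2 : dist w' s b ≠ ⊤ := by
            rw [← hq'.2]; exact pWeight_ne_top hq'.1
          refine ⟨hwuv', ?_, ?_⟩
          · rw [dist_u_eq hdec hsame s]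
            intro htop
            exact hne2 (by rw [heq2, htop, top_add])
          · rw [dist_u_eq hdec hsame s]
            exact heq2.symm
        · have h := dist_eq_of_lt hpos hpos' hdec hsame hwt
          rw [dist_self, add_zero] at h
          have hne2 : dist w s a ≠ ⊤ := by
            intro htop
            exact hwt.ne_top (by rw [h, htop, top_add])
          refine ⟨hwuv', ?_, ?_⟩
          · rw [dist_u_eq hdec hsame s]; exact hne2
          · rw [dist_u_eq hdec hsame s]; exact h.symm
  · have hw'ab : w' a b = w a b := hsame a b hab
    constructor
    · rintro ⟨h1, h2, h3⟩
      rw [hw'ab] at h1 h3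
      rcases lt_or_eq_of_le (dist_mono hle s b) with hbl | hbe
      · -- distance to b decreased: case (ii) with WT
        refine Or.inr (Or.inl ⟨?_, Or.inr hbl⟩)
        have hb := dist_eq_of_lt hpos hpos' hdec hsame hbl
        rcases lt_or_eq_of_le (dist_mono hle s a) with hal | hae
        · have ha := dist_eq_of_lt hpos hpos' hdec hsame hal
          have hKne : dist w s u + w' u v ≠ ⊤ :=
            (ENNReal.add_ne_top.mp (ha ▸ hal.ne_top)).1
          have hvane : dist w v a ≠ ⊤ :=
            (ENNReal.add_ne_top.mp (ha ▸ hal.ne_top)).2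
          refine ⟨h1, hvane, ?_⟩
          have h5 : (dist w s u + w' u v) + (dist w v a + w a b) =
              (dist w s u + w' u v) + dist w v b := by
            rw [← add_assoc, ← ha, h3, hb]
          exact (ENNReal.add_right_inj hKne).mp h5
        · exfalso
          have htri := dist_triangle hpos h1 s
          rw [← hae, h3] at htri
          exact absurd (lt_of_le_of_lt htri hbl) (lt_irrefl _)
      · -- distance to b unchanged
        rcases lt_or_eq_of_le (dist_mono hle s a) with hal | hae
        · -- distance to a decreased: case (ii) with NUM
          have ha := dist_eq_of_lt hpos hpos' hdec hsame hal
          have hKne : dist w s u + w' u v ≠ ⊤ :=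
            (ENNReal.add_ne_top.mp (ha ▸ hal.ne_top)).1
          have hvane : dist w v a ≠ ⊤ :=
            (ENNReal.add_ne_top.mp (ha ▸ hal.ne_top)).2
          have hcomp := dist_comp hpos hdec hsame s b
          have htri := dist_triangle (x := a) hpos h1 v
          have h5 : (dist w s u + w' u v) + (dist w v a + w a b) ≤
              (dist w s u + w' u v) + dist w v b := by
            rw [← add_assoc, ← ha, h3]; exact hcomp
          have h6 : dist w v a + w a b = dist w v b :=
            le_antisymm ((ENNReal.add_le_add_iff_left hKne).mp h5) htri
          refine Or.inr (Or.inl ⟨⟨h1, hvane, h6⟩, Or.inl ⟨hbe, ?_⟩⟩)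
          -- counting argument
          obtain ⟨p, hp', hpw'⟩ := exists_shortest hpos' hal.ne_top
          have hsnoc := path_snoc hp' (by rw [hw'ab]; exact h1)
          have hqshort : IsShortest w' s b (p ++ [b]) :=
            ⟨hsnoc.1, by rw [hsnoc.2, hpw', hw'ab, h3]⟩
          have hqnot : ¬ IsShortest w s b (p ++ [b]) := by
            rintro ⟨hq, hqw⟩
            obtain ⟨l1, rfl⟩ : ∃ l1, p = l1 ++ [a] :=
              List.getLast?_eq_some_iff.mp hp'.2.2.1
            have hppath : IsPath w s a (l1 ++ [a]) :=
              prefix_path (y := a) (l2 := [b])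
                (by rw [show l1 ++ a :: [b] = (l1 ++ [a]) ++ [b] by simp]; exact hq)
            have hqw2 : pWeight w ((l1 ++ [a]) ++ [b]) =
                pWeight w (l1 ++ [a]) + w a b := by
              rw [show (l1 ++ [a]) ++ [b] = l1 ++ a :: b :: [] by simp,
                pweight_append, pWeight_single, add_zero]
            rw [hqw2] at hqw
            -- hqw : pWeight w p + w a b = dist w s b
            have hfeq : pWeight w (l1 ++ [a]) + w a b = dist w' s a + w a b := by
              rw [hqw, ← hbe, ← h3]
            have hws : pWeight w (l1 ++ [a]) = dist w' s a :=
              (ENNReal.add_left_inj h1).mp hfeq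
            exact absurd (lt_of_le_of_lt (dist_le_pWeight hppath) (hws ▸ hal))
              (lt_irrefl _)
          rw [nsp, nsp]
          refine Set.ncard_lt_ncard ?_ (shortest_finite hpos')
          rw [Set.ssubset_def]
          exact ⟨old_subset_new hdec hsame hbe, fun hsub => hqnot (hsub hqshort)⟩
        · -- distance to a unchanged: case (i)
          refine Or.inl ⟨⟨h1, by rw [← hae]; exact h2, by rw [← hae, ← hbe]; exact h3⟩,
            hab, ?_⟩
          rcases lt_or_eq_of_le (nsp_le_new hpos' hdec hsame hbe) with hlt | heq
          · exact Or.inr ⟨hbe, hlt⟩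
          · exact Or.inl ⟨hbe, heq.symm⟩
    · rintro (⟨⟨hw, hDa, hDab⟩, -, hflag⟩ | ⟨⟨hw, hva, hvab⟩, hflag⟩ | ⟨heq, -⟩)
      · -- case (i)
        have hd : dist w' s b = dist w s b := by
          rcases hflag with ⟨hd, -⟩ | ⟨hd, -⟩ <;> exact hd
        have hDa' : dist w' s a ≠ ⊤ := fun htop =>
          hDa (top_le_iff.mp (htop ▸ dist_mono hle s a))
        refine ⟨by rw [hw'ab]; exact hw, hDa', ?_⟩
        refine le_antisymm ?_ (dist_triangle hpos' (by rw [hw'ab]; exact hw) s)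
        calc dist w' s a + w' a b ≤ dist w s a + w a b :=
              add_le_add (dist_mono hle s a) (hle a b)
          _ = dist w s b := hDab
          _ = dist w' s b := hd.symm
      · -- case (ii)
        have hkey : dist w' s b = dist w s u + w' u v + dist w v b ∧ dist w' s b ≠ ⊤ := by
          rcases hflag with ⟨hd, hn⟩ | hwt
          · obtain ⟨q, hq', hqnot⟩ := exists_new_not_old hpos hn
            have hm : (u, v) ∈ q.zip q.tail := by
              by_contra hm
              exact hqnot ⟨path_congr_avoid hsame hm hq'.1,
                by rw [← pWeight_congr_avoid hsame hm, hq'.2, hd]⟩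
            have hge := pweight_ge_of_mem hdec hsame hq'.1 hm
            rw [hq'.2] at hge
            exact ⟨le_antisymm (dist_comp hpos hdec hsame s b) hge,
              by rw [← hq'.2]; exact pWeight_ne_top hq'.1⟩
          · exact ⟨by
              have h := dist_eq_of_lt hpos hpos' hdec hsame hwt
              exact h, hwt.ne_top⟩
        obtain ⟨hKb, hne⟩ := hkey
        have h7 : dist w' s b = (dist w s u + w' u v + dist w v a) + w a b := by
          rw [hKb, ← hvab]; ring
        have hcompa := dist_comp hpos hdec hsame s a
        have htri' := dist_triangle hpos' (by rw [hw'ab]; exact hw) s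
        rw [hw'ab] at htri'
        have hup : dist w' s a + w a b ≤ dist w' s b := by
          rw [h7]; exact add_le_add hcompa le_rfl
        have heq2 : dist w' s a + w a b = dist w' s b := le_antisymm hup htri'
        have hDa' : dist w' s a ≠ ⊤ := fun htop =>
          hne (by rw [← heq2, htop, top_add])
        exact ⟨by rw [hw'ab]; exact hw, hDa', by rw [hw'ab]; exact heq2⟩
      · exact absurd heq hab

end BC
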